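/- For every natural number ℓ, every family n : Fin (ℓ+1) → ℕ, and every k with 0 ≤ k ≤ ℓ+1, Σ_{I ⊆ Fin(ℓ+1), |I| = k} (∏_{i ∈ I} n_i)·(∏_{j ∉ I} (n_j + 1)) = Σ_{p=k}^{ℓ+1} C(p,k)·S_p(n), where C(p,k) is the binomial coefficient and S_p(n) = Σ_{I ⊆ Fin(ℓ+1), |I| = p} ∏_{i ∈ I} n_i is the elementary symmetric polynomial of degree p. -/

import Mathlib

open Finset

/-- The number of `k`-dimensional elementary cubes of the cubical complex
`CL~(n)` equals `∑_{p=k}^{ℓ+1} C(p,k) S_p(n)`. -/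
theorem stmt_1 (ℓ : ℕ) (n : Fin (ℓ + 1) → ℕ) (k : ℕ) (hk : k ≤ ℓ + 1) :
    ∑ I ∈ Finset.powersetCard k (Finset.univ : Finset (Fin (ℓ + 1))),
        (∏ i ∈ I, n i) * ∏ j ∈ Iᶜ, (n j + 1) =
      ∑ p ∈ Finset.Icc k (ℓ + 1),
        Nat.choose p k *
          ∑ I ∈ Finset.powersetCard p (Finset.univ : Finset (Fin (ℓ + 1))),
            ∏ i ∈ I, n i := by
  classical
  have hL : ∑ I ∈ Finset.powersetCard k (Finset.univ : Finset (Fin (ℓ + 1))),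
        (∏ i ∈ I, n i) * ∏ j ∈ Iᶜ, (n j + 1) =
      ∑ I ∈ Finset.powersetCard k (Finset.univ : Finset (Fin (ℓ + 1))),
        ∑ J ∈ Iᶜ.powerset, ∏ i ∈ I ∪ J, n i := by
    refine Finset.sum_congr rfl fun I _ => ?_
    rw [show (∏ j ∈ Iᶜ, (n j + 1)) = ∑ J ∈ Iᶜ.powerset, ∏ j ∈ J, n j by
      rw [Finset.prod_add]; simp, Finset.mul_sum]
    refine Finset.sum_congr rfl fun J hJ => ?_
    rw [Finset.prod_union (Finset.disjoint_left.2 fun a ha ha' =>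
      (Finset.mem_compl.1 (Finset.mem_powerset.1 hJ ha')) ha)]
  have hR : ∑ p ∈ Finset.Icc k (ℓ + 1),
        Nat.choose p k *
          ∑ I ∈ Finset.powersetCard p (Finset.univ : Finset (Fin (ℓ + 1))),
            ∏ i ∈ I, n i =
      ∑ P ∈ (Finset.univ : Finset (Fin (ℓ + 1))).powerset,
        ∑ _I ∈ P.powersetCard k, ∏ i ∈ P, n i := by
    rw [Finset.powerset_card_biUnion, Finset.sum_biUnion (fun i _ j _ h => Finset.pairwise_disjoint_powersetCard _ h)]
    rw [show (Finset.univ : Finset (Fin (ℓ + 1))).card = ℓ + 1 by simp]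
    rw [show Finset.Icc k (ℓ + 1) = (Finset.range (ℓ + 1 + 1)).filter (k ≤ ·) by
      ext p; simp [Nat.lt_succ_iff, and_comm]]
    rw [Finset.sum_filter]
    refine Finset.sum_congr rfl fun p _ => ?_
    rcases le_or_gt k p with h | h
    · rw [if_pos h, Finset.mul_sum]
      refine Finset.sum_congr rfl fun P hP => ?_
      rw [Finset.sum_const, smul_eq_mul, Finset.card_powersetCard,
        (Finset.mem_powersetCard.1 hP).2]
    · rw [if_neg (not_le.2 h)]
      refine (Finset.sum_eq_zero fun P hP => ?_).symm
      rw [Finset.powersetCard_eq_empty.2 ?_, Finset.sum_empty]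
      rw [(Finset.mem_powersetCard.1 hP).2]; exact h
  rw [hL, hR, Finset.sum_sigma', Finset.sum_sigma']
  refine Finset.sum_nbij' (fun x => ⟨x.1 ∪ x.2, x.1⟩) (fun x => ⟨x.2, x.1 \ x.2⟩)
    ?_ ?_ ?_ ?_ ?_
  · rintro ⟨I, J⟩ h
    simp only [Finset.mem_sigma, Finset.mem_powersetCard_univ, Finset.mem_powerset] at h ⊢
    exact ⟨Finset.subset_univ _, Finset.mem_powersetCard.2 ⟨Finset.subset_union_left, h.1⟩⟩
  · rintro ⟨P, I⟩ h
    simp only [Finset.mem_sigma, Finset.mem_powerset, Finset.mem_powersetCard,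
      Finset.mem_powersetCard_univ] at h ⊢
    exact ⟨⟨Finset.subset_univ _, h.2.2⟩, fun a ha => Finset.mem_compl.2 fun ha' => (Finset.mem_sdiff.1 ha).2 ha'⟩
  · rintro ⟨I, J⟩ h
    simp only [Finset.mem_sigma, Finset.mem_powersetCard_univ, Finset.mem_powerset] at h
    have hd : Disjoint I J := Finset.disjoint_left.2 fun a ha ha' =>
      (Finset.mem_compl.1 (h.2 ha')) ha
    simp [Finset.union_sdiff_cancel_left hd]
  · rintro ⟨P, I⟩ h
    simp only [Finset.mem_sigma, Finset.mem_powerset, Finset.mem_powersetCard] at h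
    simp [Finset.union_sdiff_of_subset h.2.1]
  · rintro ⟨I, J⟩ h
    simp only [Finset.mem_sigma, Finset.mem_powersetCard_univ, Finset.mem_powerset] at h
    rfl
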